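/- Let Q_1, Q_2 be positive definite Hermitian matrices on a finite-dimensional complex inner product space, let t ∈ ℝ, and set R_k := Q_k (Q_k + I)^{−1} and W_t := R_1^{t/2} R_2^{1−t} R_1^{t/2} (real powers of positive definite matrices via the functional calculus). Then det[(Q_1+I)^t (Q_2+I)^{1−t} − Q_1^t Q_2^{1−t}] = det(Q_1+I)^t · det(Q_2+I)^{1−t} · det(I − W_t). In particular, if additionally W_t ≺ I, then log det[(Q_1+I)^t (Q_2+I)^{1−t} − Q_1^t Q_2^{1−t}] = t Tr log(Q_1+I) + (1−t) Tr log(Q_2+I) + Tr log(I − W_t), and this hypothesis W_t ≺ I holds automatically for all t ∈ [0,1]. -/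

import Mathlib

open Matrix
open scoped ComplexOrder

noncomputable section

variable {n : Type*} [Fintype n] [DecidableEq n]

/-- Real power `A^t` of a positive matrix via the continuous functional calculus. -/
def mpow (A : Matrix n n ℂ) (t : ℝ) : Matrix n n ℂ := cfc (fun x : ℝ => x ^ t) A

/-- Logarithm of a positive definite matrix via the continuous functional calculus. -/
def mlog (A : Matrix n n ℂ) : Matrix n n ℂ := cfc Real.log A

/-- `R_k = Q_k (Q_k + I)⁻¹`. -/
def Rmat (Q : Matrix n n ℂ) : Matrix n n ℂ := Q * (Q + 1)⁻¹

/-- `W_t = R₁^{t/2} R₂^{1−t} R₁^{t/2}`. -/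
def Wmat (Q₁ Q₂ : Matrix n n ℂ) (t : ℝ) : Matrix n n ℂ :=
  mpow (Rmat Q₁) (t / 2) * mpow (Rmat Q₂) (1 - t) * mpow (Rmat Q₁) (t / 2)

namespace AuxDetW

lemma contOn (f : ℝ → ℝ) (A : Matrix n n ℂ) : ContinuousOn f (spectrum ℝ A) :=
  (Matrix.finite_real_spectrum (A:=A)).continuousOn f

lemma contOn' (f g : ℝ → ℝ) (A : Matrix n n ℂ) : ContinuousOn f (g '' spectrum ℝ A) :=
  ((Matrix.finite_real_spectrum (A:=A)).image g).continuousOn f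

lemma spec_pos {Q : Matrix n n ℂ} (hQ : Q.PosDef) : ∀ x ∈ spectrum ℝ Q, 0 < x := by
  rw [Matrix.IsHermitian.spectrum_real_eq_range_eigenvalues hQ.1]
  rintro x ⟨i, rfl⟩
  exact hQ.eigenvalues_pos i

lemma cfc_eq_rep {A : Matrix n n ℂ} (hA : A.IsHermitian) (f : ℝ → ℝ) :
    cfc f A = (Matrix.IsHermitian.eigenvectorUnitary hA : Matrix n n ℂ) *
      (Matrix.diagonal (RCLike.ofReal ∘ f ∘ hA.eigenvalues)) *
      star (Matrix.IsHermitian.eigenvectorUnitary hA : Matrix n n ℂ) :=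
  (hA.cfc_eq f).trans rfl

lemma star_mul_self_eigU {A : Matrix n n ℂ} (hA : A.IsHermitian) :
    star (Matrix.IsHermitian.eigenvectorUnitary hA : Matrix n n ℂ) *
      (Matrix.IsHermitian.eigenvectorUnitary hA : Matrix n n ℂ) = 1 :=
  Matrix.mem_unitaryGroup_iff'.mp (Matrix.IsHermitian.eigenvectorUnitary hA).2

lemma mul_star_self_eigU {A : Matrix n n ℂ} (hA : A.IsHermitian) :
    (Matrix.IsHermitian.eigenvectorUnitary hA : Matrix n n ℂ) *
      star (Matrix.IsHermitian.eigenvectorUnitary hA : Matrix n n ℂ) = 1 :=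
  Matrix.mem_unitaryGroup_iff.mp (Matrix.IsHermitian.eigenvectorUnitary hA).2

lemma trace_cfc' {A : Matrix n n ℂ} (hA : A.IsHermitian) (f : ℝ → ℝ) :
    (cfc f A).trace = ∑ i, (f (hA.eigenvalues i) : ℂ) := by
  rw [cfc_eq_rep hA f, Matrix.trace_mul_cycle, star_mul_self_eigU hA,
    Matrix.one_mul, Matrix.trace_diagonal]
  rfl

lemma det_cfc' {A : Matrix n n ℂ} (hA : A.IsHermitian) (f : ℝ → ℝ) :
    (cfc f A).det = ∏ i, (f (hA.eigenvalues i) : ℂ) := by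
  rw [cfc_eq_rep hA f, Matrix.det_mul, Matrix.det_mul]
  have h1 : (Matrix.IsHermitian.eigenvectorUnitary hA : Matrix n n ℂ).det *
      (star (Matrix.IsHermitian.eigenvectorUnitary hA : Matrix n n ℂ)).det = 1 := by
    rw [← Matrix.det_mul, mul_star_self_eigU hA, Matrix.det_one]
  calc (Matrix.IsHermitian.eigenvectorUnitary hA : Matrix n n ℂ).det *
        (Matrix.diagonal (RCLike.ofReal ∘ f ∘ hA.eigenvalues)).det *
        (star (Matrix.IsHermitian.eigenvectorUnitary hA : Matrix n n ℂ)).det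
      = (Matrix.diagonal (RCLike.ofReal ∘ f ∘ hA.eigenvalues)).det * ((Matrix.IsHermitian.eigenvectorUnitary hA : Matrix n n ℂ).det * (star (Matrix.IsHermitian.eigenvectorUnitary hA : Matrix n n ℂ)).det) := by ring
    _ = ∏ i, (f (hA.eigenvalues i) : ℂ) := by rw [h1, mul_one, Matrix.det_diagonal]; rfl

lemma qf_cfc {A : Matrix n n ℂ} (hA : A.IsHermitian) (f : ℝ → ℝ) (x : n → ℂ) :
    star x ⬝ᵥ (cfc f A) *ᵥ x =
      ((∑ i, f (hA.eigenvalues i) *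
        Complex.normSq ((star (Matrix.IsHermitian.eigenvectorUnitary hA : Matrix n n ℂ) *ᵥ x) i) : ℝ) : ℂ) := by
  set U := (Matrix.IsHermitian.eigenvectorUnitary hA : Matrix n n ℂ) with hU
  set z := star U *ᵥ x with hz
  have h1 : (cfc f A) *ᵥ x = U *ᵥ ((Matrix.diagonal (RCLike.ofReal ∘ f ∘ hA.eigenvalues)) *ᵥ z) := by
    rw [cfc_eq_rep hA f, ← Matrix.mulVec_mulVec, ← Matrix.mulVec_mulVec]
  have h2 : star x ᵥ* U = star z := by
    rw [hz, Matrix.star_mulVec, Matrix.star_eq_conjTranspose, Matrix.conjTranspose_conjTranspose]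
  rw [h1, Matrix.dotProduct_mulVec, h2]
  simp only [dotProduct, Matrix.mulVec_diagonal]
  push_cast
  refine Finset.sum_congr rfl fun i _ => ?_
  have : (starRingEnd ℂ) (z i) * z i = (Complex.normSq (z i) : ℂ) := by
    rw [mul_comm, Complex.mul_conj]
  simp only [Pi.star_apply, RCLike.star_def, Function.comp_apply]
  rw [mul_comm ((starRingEnd ℂ) (z i)), mul_assoc, Complex.mul_conj]
  norm_num


lemma posDef_cfc {A : Matrix n n ℂ} (hA : A.PosDef) {f : ℝ → ℝ}
    (hf : ∀ i, 0 < f (hA.1.eigenvalues i)) : (cfc f A).PosDef := by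
  refine Matrix.PosDef.of_dotProduct_mulVec_pos (cfc_predicate f A) fun x hx => ?_
  rw [qf_cfc hA.1 f x]
  set U := (Matrix.IsHermitian.eigenvectorUnitary hA.1 : Matrix n n ℂ) with hU
  set z := star U *ᵥ x with hz
  have hzx : U *ᵥ z = x := by
    rw [hz, Matrix.mulVec_mulVec, mul_star_self_eigU hA.1, Matrix.one_mulVec]
  have hzne : z ≠ 0 := by
    intro h
    rw [h, Matrix.mulVec_zero] at hzx
    exact hx hzx.symm
  obtain ⟨i, hi⟩ := Function.ne_iff.mp hzne
  have : (0:ℝ) < ∑ i, f (hA.1.eigenvalues i) * Complex.normSq (z i) := by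
    refine Finset.sum_pos' (fun j _ => mul_nonneg (hf j).le (Complex.normSq_nonneg _)) ?_
    exact ⟨i, Finset.mem_univ i, mul_pos (hf i) (Complex.normSq_pos.mpr hi)⟩
  exact_mod_cast this

lemma cfc_mul' {A : Matrix n n ℂ} (f g : ℝ → ℝ) :
    cfc f A * cfc g A = cfc (fun x => f x * g x) A :=
  (cfc_mul f g A (contOn f A) (contOn g A)).symm

variable {Q : Matrix n n ℂ}

lemma cfc_one' {A : Matrix n n ℂ} (hA : A.IsHermitian) : cfc (fun _ : ℝ => (1:ℝ)) A = 1 :=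
  cfc_one ℝ A hA

lemma add_one_eq_cfc (hQ : Q.PosDef) : Q + 1 = cfc (fun x : ℝ => x + 1) Q := by
  have h1 : cfc (fun x : ℝ => x + 1) Q
      = cfc (fun x : ℝ => x) Q + cfc (fun _ : ℝ => (1:ℝ)) Q :=
    cfc_add (a := Q) (fun x : ℝ => x) (fun _ : ℝ => 1) (contOn _ Q) (contOn _ Q)
  have h2 : cfc (fun x : ℝ => x) Q = Q := cfc_id' ℝ Q hQ.1
  have h3 : cfc (fun _ : ℝ => (1:ℝ)) Q = 1 := cfc_one' hQ.1
  rw [h1, h2, h3]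

lemma inv_add_one_eq_cfc (hQ : Q.PosDef) : (Q + 1)⁻¹ = cfc (fun x : ℝ => (x + 1)⁻¹) Q := by
  apply Matrix.inv_eq_right_inv
  have h1 : cfc (fun x : ℝ => x + 1) Q * cfc (fun x : ℝ => (x + 1)⁻¹) Q
      = cfc (fun x : ℝ => (x + 1) * (x + 1)⁻¹) Q := cfc_mul' _ _
  have h2 : cfc (fun x : ℝ => (x + 1) * (x + 1)⁻¹) Q = cfc (fun _ : ℝ => (1:ℝ)) Q := by
    apply cfc_congr
    intro x hx
    have hx1 : (0:ℝ) < x + 1 := by linarith [spec_pos hQ x hx]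
    exact mul_inv_cancel₀ hx1.ne'
  rw [add_one_eq_cfc hQ, h1, h2, cfc_one' hQ.1]

lemma rmat_eq_cfc (hQ : Q.PosDef) : Rmat Q = cfc (fun x : ℝ => x * (x + 1)⁻¹) Q := by
  have h2 : cfc (fun x : ℝ => x) Q = Q := cfc_id' ℝ Q hQ.1
  have h1 : cfc (fun x : ℝ => x) Q * cfc (fun x : ℝ => (x + 1)⁻¹) Q
      = cfc (fun x : ℝ => x * (x + 1)⁻¹) Q := cfc_mul' _ _
  rw [Rmat, inv_add_one_eq_cfc hQ, ← h1, h2]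

lemma mpow_add_one_eq_cfc (hQ : Q.PosDef) (s : ℝ) :
    mpow (Q + 1) s = cfc (fun x : ℝ => (x + 1) ^ s) Q := by
  have h1 : cfc (fun x : ℝ => (x + 1) ^ s) Q
      = cfc (fun x : ℝ => x ^ s) (cfc (fun x : ℝ => x + 1) Q) :=
    cfc_comp' (fun x : ℝ => x ^ s) (fun x : ℝ => x + 1) Q (contOn' _ _ Q) (contOn _ Q) hQ.1
  rw [mpow, add_one_eq_cfc hQ, ← h1]

lemma mpow_rmat_eq_cfc (hQ : Q.PosDef) (s : ℝ) :
    mpow (Rmat Q) s = cfc (fun x : ℝ => (x * (x + 1)⁻¹) ^ s) Q := by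
  have h1 : cfc (fun x : ℝ => (x * (x + 1)⁻¹) ^ s) Q
      = cfc (fun x : ℝ => x ^ s) (cfc (fun x : ℝ => x * (x + 1)⁻¹) Q) :=
    cfc_comp' (fun x : ℝ => x ^ s) (fun x : ℝ => x * (x + 1)⁻¹) Q (contOn' _ _ Q) (contOn _ Q) hQ.1
  rw [mpow, rmat_eq_cfc hQ, ← h1]

lemma mpow_posDef {A : Matrix n n ℂ} (hA : A.PosDef) (r : ℝ) : (mpow A r).PosDef :=
  posDef_cfc hA (fun i => Real.rpow_pos_of_pos (hA.eigenvalues_pos i) r)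

lemma add_one_posDef (hQ : Q.PosDef) : (Q + 1).PosDef :=
  hQ.add_posSemidef Matrix.PosSemidef.one

lemma mpow_split (hQ : Q.PosDef) (s : ℝ) :
    mpow Q s = mpow (Q + 1) s * mpow (Rmat Q) s := by
  rw [mpow_add_one_eq_cfc hQ, mpow_rmat_eq_cfc hQ, cfc_mul']
  apply cfc_congr
  intro x hx
  have hx0 := spec_pos hQ x hx
  have hx1 : (0:ℝ) < x + 1 := by linarith
  show x ^ s = (x + 1) ^ s * (x * (x + 1)⁻¹) ^ s
  rw [← Real.mul_rpow hx1.le (by positivity)]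
  rw [show (x+1) * (x * (x+1)⁻¹) = x by field_simp]

lemma mpow_rmat_half (hQ : Q.PosDef) (s : ℝ) :
    mpow (Rmat Q) (s/2) * mpow (Rmat Q) (s/2) = mpow (Rmat Q) s := by
  rw [mpow_rmat_eq_cfc hQ, mpow_rmat_eq_cfc hQ, cfc_mul']
  apply cfc_congr
  intro x hx
  have hx0 := spec_pos hQ x hx
  have hr : (0:ℝ) < x * (x+1)⁻¹ := by positivity
  show (x * (x+1)⁻¹) ^ (s/2) * (x * (x+1)⁻¹) ^ (s/2) = (x * (x+1)⁻¹) ^ s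
  rw [← Real.rpow_add hr]
  norm_num

lemma mpow_comm (hQ : Q.PosDef) (s r : ℝ) :
    mpow (Q + 1) s * mpow (Rmat Q) r = mpow (Rmat Q) r * mpow (Q + 1) s := by
  rw [mpow_add_one_eq_cfc hQ, mpow_rmat_eq_cfc hQ, cfc_mul', cfc_mul']
  exact cfc_congr fun x _ => mul_comm _ _


lemma rmat_posDef (hQ : Q.PosDef) : (Rmat Q).PosDef := by
  rw [rmat_eq_cfc hQ]
  refine posDef_cfc hQ fun i => ?_
  have := hQ.eigenvalues_pos i
  positivity

lemma det_mpow_eq {M : Matrix n n ℂ} (hM : M.PosDef) (r : ℝ) :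
    (mpow M r).det = ((∏ i, hM.1.eigenvalues i ^ r : ℝ) : ℂ) := by
  rw [mpow, det_cfc' hM.1]
  push_cast
  rfl

lemma log_det {M : Matrix n n ℂ} (hM : M.PosDef) : Complex.log M.det = (mlog M).trace := by
  have he : ∀ i, 0 < hM.1.eigenvalues i := hM.eigenvalues_pos
  have hdet : M.det = ((∏ i, hM.1.eigenvalues i : ℝ) : ℂ) := by
    rw [hM.1.det_eq_prod_eigenvalues]; push_cast; rfl
  have htr : (mlog M).trace = ((∑ i, Real.log (hM.1.eigenvalues i) : ℝ) : ℂ) := by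
    rw [mlog, trace_cfc' hM.1]; push_cast; rfl
  rw [hdet, htr, ← Complex.ofReal_log (Finset.prod_nonneg fun i _ => (he i).le),
    Real.log_prod fun i _ => (he i).ne']

lemma log_det_mpow {M : Matrix n n ℂ} (hM : M.PosDef) (r : ℝ) :
    Complex.log (mpow M r).det = (r : ℂ) * (mlog M).trace := by
  have he : ∀ i, 0 < hM.1.eigenvalues i := hM.eigenvalues_pos
  have htr : (mlog M).trace = ((∑ i, Real.log (hM.1.eigenvalues i) : ℝ) : ℂ) := by
    rw [mlog, trace_cfc' hM.1]; push_cast; rfl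
  rw [det_mpow_eq hM r, htr,
    ← Complex.ofReal_log (Finset.prod_nonneg fun i _ => (Real.rpow_pos_of_pos (he i) r).le),
    Real.log_prod fun i _ => (Real.rpow_pos_of_pos (he i) r).ne',
    show (∑ i, Real.log (hM.1.eigenvalues i ^ r)) = r * ∑ i, Real.log (hM.1.eigenvalues i) by
      rw [Finset.mul_sum]; exact Finset.sum_congr rfl fun i _ => Real.log_rpow (he i) r]
  push_cast; ring

lemma clog_mul3 {a b c : ℝ} (ha : 0 < a) (hb : 0 < b) (hc : 0 < c) :
    Complex.log ((a:ℂ) * (b:ℂ) * (c:ℂ)) =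
      Complex.log (a:ℂ) + Complex.log (b:ℂ) + Complex.log (c:ℂ) := by
  rw [← Complex.ofReal_mul, ← Complex.ofReal_mul, ← Complex.ofReal_log (by positivity),
    ← Complex.ofReal_log ha.le, ← Complex.ofReal_log hb.le, ← Complex.ofReal_log hc.le,
    Real.log_mul (by positivity) hc.ne', Real.log_mul ha.ne' hb.ne']
  push_cast; ring


lemma det_factor (Q₁ Q₂ : Matrix n n ℂ) (hQ₁ : Q₁.PosDef) (hQ₂ : Q₂.PosDef) (t : ℝ) :
    (mpow (Q₁ + 1) t * mpow (Q₂ + 1) (1 - t) - mpow Q₁ t * mpow Q₂ (1 - t)).det =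
      (mpow (Q₁ + 1) t).det * (mpow (Q₂ + 1) (1 - t)).det * (1 - Wmat Q₁ Q₂ t).det := by
  have hsplit : mpow (Q₁ + 1) t * mpow (Q₂ + 1) (1 - t) - mpow Q₁ t * mpow Q₂ (1 - t)
      = mpow (Q₁ + 1) t * (1 - mpow (Rmat Q₁) t * mpow (Rmat Q₂) (1 - t)) * mpow (Q₂ + 1) (1 - t) := by
    rw [mpow_split hQ₁ t, mpow_split hQ₂ (1 - t), mpow_comm hQ₂ (1 - t) (1 - t)]
    noncomm_ring
  have hkey : (1 - mpow (Rmat Q₁) t * mpow (Rmat Q₂) (1 - t)) * mpow (Rmat Q₁) (t / 2)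
      = mpow (Rmat Q₁) (t / 2) * (1 - Wmat Q₁ Q₂ t) := by
    rw [Wmat, ← mpow_rmat_half hQ₁ t]
    noncomm_ring
  have hCdet : (mpow (Rmat Q₁) (t / 2)).det ≠ 0 :=
    (mpow_posDef (rmat_posDef hQ₁) (t / 2)).det_pos.ne'
  have hdet2 : (1 - mpow (Rmat Q₁) t * mpow (Rmat Q₂) (1 - t)).det = (1 - Wmat Q₁ Q₂ t).det := by
    have h2 := congrArg Matrix.det hkey
    rw [Matrix.det_mul, Matrix.det_mul, mul_comm] at h2
    exact mul_left_cancel₀ hCdet h2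
  rw [hsplit, Matrix.det_mul, Matrix.det_mul, hdet2]
  ring

lemma one_sub_W_posDef (Q₁ Q₂ : Matrix n n ℂ) (hQ₁ : Q₁.PosDef) (hQ₂ : Q₂.PosDef)
    {s : ℝ} (hs0 : 0 ≤ s) (hs1 : s ≤ 1) : (1 - Wmat Q₁ Q₂ s).PosDef := by
  rcases isEmpty_or_nonempty n with h | h
  · have h1 : (1 - Wmat Q₁ Q₂ s) = 1 := Subsingleton.elim _ _
    rw [h1]; exact Matrix.PosDef.one
  set c : ℝ → ℝ := fun x => (x * (x + 1)⁻¹) ^ (s / 2) with hc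
  set b : ℝ → ℝ := fun x => (x * (x + 1)⁻¹) ^ (1 - s) with hb
  have hC : mpow (Rmat Q₁) (s / 2) = cfc c Q₁ := mpow_rmat_eq_cfc hQ₁ (s / 2)
  have hB : mpow (Rmat Q₂) (1 - s) = cfc b Q₂ := mpow_rmat_eq_cfc hQ₂ (1 - s)
  have hCh : (cfc c Q₁).IsHermitian := cfc_predicate c Q₁
  have hBh : (cfc b Q₂).IsHermitian := cfc_predicate b Q₂
  set e₁ := hQ₁.1.eigenvalues with he₁
  set e₂ := hQ₂.1.eigenvalues with he₂
  set r₁ : n → ℝ := fun i => e₁ i * (e₁ i + 1)⁻¹ with hr₁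
  set r₂ : n → ℝ := fun i => e₂ i * (e₂ i + 1)⁻¹ with hr₂
  have hr₁pos : ∀ i, 0 < r₁ i := fun i => by
    have := hQ₁.eigenvalues_pos i; positivity
  have hr₂pos : ∀ i, 0 < r₂ i := fun i => by
    have := hQ₂.eigenvalues_pos i; positivity
  have hr₁lt : ∀ i, r₁ i < 1 := fun i => by
    have h0 := hQ₁.eigenvalues_pos i
    rw [hr₁]; dsimp only; rw [← div_eq_mul_inv]
    exact (div_lt_one (by linarith)).mpr (by linarith)
  have hr₂lt : ∀ i, r₂ i < 1 := fun i => by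
    have h0 := hQ₂.eigenvalues_pos i
    rw [hr₂]; dsimp only; rw [← div_eq_mul_inv]
    exact (div_lt_one (by linarith)).mpr (by linarith)
  set m : ℝ := Finset.univ.sup' Finset.univ_nonempty (fun i => max (r₁ i) (r₂ i)) with hm
  have hsup : ∀ i, max (r₁ i) (r₂ i) ≤ m := fun i =>
    Finset.le_sup' (fun i => max (r₁ i) (r₂ i)) (Finset.mem_univ i)
  have hr₁m : ∀ i, r₁ i ≤ m := fun i => le_trans (le_max_left _ _) (hsup i)
  have hr₂m : ∀ i, r₂ i ≤ m := fun i => le_trans (le_max_right _ _) (hsup i)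
  have hm_lt : m < 1 := by
    rw [hm, Finset.sup'_lt_iff]
    exact fun i _ => max_lt (hr₁lt i) (hr₂lt i)
  have hm_pos : 0 < m := lt_of_lt_of_le (hr₁pos (Classical.arbitrary n)) (hr₁m _)
  -- Hermitian part
  have hWh : (Wmat Q₁ Q₂ s).IsHermitian := by
    rw [Wmat, hC, hB]
    show (cfc c Q₁ * cfc b Q₂ * cfc c Q₁)ᴴ = _
    rw [Matrix.conjTranspose_mul, Matrix.conjTranspose_mul, hCh.eq, hBh.eq, Matrix.mul_assoc]
  refine Matrix.PosDef.of_dotProduct_mulVec_pos (Matrix.isHermitian_one.sub hWh) fun x hx => ?_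
  set U₁ := (Matrix.IsHermitian.eigenvectorUnitary hQ₁.1 : Matrix n n ℂ) with hU₁
  set z := star U₁ *ᵥ x with hz
  set y := cfc c Q₁ *ᵥ x with hy
  set w := (star (Matrix.IsHermitian.eigenvectorUnitary hQ₂.1 : Matrix n n ℂ)) *ᵥ y with hw
  -- z ≠ 0
  have hzx : U₁ *ᵥ z = x := by
    rw [hz, Matrix.mulVec_mulVec, mul_star_self_eigU hQ₁.1, Matrix.one_mulVec]
  have hzne : z ≠ 0 := fun h => hx (by rw [← hzx, h, Matrix.mulVec_zero])
  -- the basic quadratic form identities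
  have hxx : star x ⬝ᵥ x = ((∑ i, (1:ℝ) * Complex.normSq (z i) : ℝ) : ℂ) := by
    have h1 := qf_cfc hQ₁.1 (fun _ : ℝ => (1:ℝ)) x
    rw [cfc_one' hQ₁.1, Matrix.one_mulVec] at h1
    exact h1
  have hstarxC : star x ᵥ* cfc c Q₁ = star y := by
    rw [hy, Matrix.star_mulVec, hCh.eq]
  have hWqf : star x ⬝ᵥ (Wmat Q₁ Q₂ s) *ᵥ x
      = ((∑ j, b (e₂ j) * Complex.normSq (w j) : ℝ) : ℂ) := by
    have hvec : (Wmat Q₁ Q₂ s) *ᵥ x = cfc c Q₁ *ᵥ (cfc b Q₂ *ᵥ y) := by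
      rw [Wmat, hC, hB, ← Matrix.mulVec_mulVec, ← Matrix.mulVec_mulVec, ← hy]
    rw [hvec, Matrix.dotProduct_mulVec, hstarxC]
    exact qf_cfc hQ₂.1 b y
  have hyy : star y ⬝ᵥ y = ((∑ j, (1:ℝ) * Complex.normSq (w j) : ℝ) : ℂ) := by
    have h1 := qf_cfc hQ₂.1 (fun _ : ℝ => (1:ℝ)) y
    rw [cfc_one' hQ₂.1, Matrix.one_mulVec] at h1
    exact h1
  have hyy2 : star y ⬝ᵥ y = ((∑ i, (c (e₁ i) * c (e₁ i)) * Complex.normSq (z i) : ℝ) : ℂ) := by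
    have h1 : star y ⬝ᵥ y = star x ⬝ᵥ (cfc (fun x => c x * c x) Q₁) *ᵥ x := by
      conv_lhs => rw [← hstarxC, ← Matrix.dotProduct_mulVec, hy, Matrix.mulVec_mulVec,
        cfc_mul' c c]
    rw [h1]
    exact qf_cfc hQ₁.1 (fun x => c x * c x) x
  have hKey : (∑ j, (1:ℝ) * Complex.normSq (w j))
      = ∑ i, (c (e₁ i) * c (e₁ i)) * Complex.normSq (z i) := by
    have := hyy.symm.trans hyy2
    exact_mod_cast this
  -- bounds
  have hb_le : ∀ j, b (e₂ j) ≤ m ^ (1 - s) := fun j =>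
    Real.rpow_le_rpow (hr₂pos j).le (hr₂m j) (by linarith)
  have hcc_le : ∀ i, c (e₁ i) * c (e₁ i) ≤ m ^ s := fun i => by
    have h1 : c (e₁ i) * c (e₁ i) = r₁ i ^ s := by
      rw [hc]; dsimp only
      rw [← Real.rpow_add (hr₁pos i)]
      norm_num
    rw [h1]
    exact Real.rpow_le_rpow (hr₁pos i).le (hr₁m i) hs0
  have hS_pos : 0 < ∑ i, (1:ℝ) * Complex.normSq (z i) := by
    obtain ⟨i, hi⟩ := Function.ne_iff.mp hzne
    refine Finset.sum_pos' (fun j _ => by rw [one_mul]; exact Complex.normSq_nonneg _)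
      ⟨i, Finset.mem_univ i, ?_⟩
    rw [one_mul]
    exact Complex.normSq_pos.mpr hi
  have hT_le : (∑ j, b (e₂ j) * Complex.normSq (w j))
      ≤ m * ∑ i, (1:ℝ) * Complex.normSq (z i) := by
    have step1 : (∑ j, b (e₂ j) * Complex.normSq (w j))
        ≤ m ^ (1 - s) * ∑ j, (1:ℝ) * Complex.normSq (w j) := by
      rw [Finset.mul_sum]
      refine Finset.sum_le_sum fun j _ => ?_
      rw [one_mul]
      exact mul_le_mul_of_nonneg_right (hb_le j) (Complex.normSq_nonneg _)
    have step2 : (∑ i, (c (e₁ i) * c (e₁ i)) * Complex.normSq (z i))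
        ≤ m ^ s * ∑ i, (1:ℝ) * Complex.normSq (z i) := by
      rw [Finset.mul_sum]
      refine Finset.sum_le_sum fun i _ => ?_
      rw [one_mul]
      exact mul_le_mul_of_nonneg_right (hcc_le i) (Complex.normSq_nonneg _)
    calc (∑ j, b (e₂ j) * Complex.normSq (w j))
        ≤ m ^ (1 - s) * ∑ j, (1:ℝ) * Complex.normSq (w j) := step1
      _ = m ^ (1 - s) * ∑ i, (c (e₁ i) * c (e₁ i)) * Complex.normSq (z i) := by rw [hKey]
      _ ≤ m ^ (1 - s) * (m ^ s * ∑ i, (1:ℝ) * Complex.normSq (z i)) :=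
          mul_le_mul_of_nonneg_left step2 (Real.rpow_nonneg hm_pos.le _)
      _ = m * ∑ i, (1:ℝ) * Complex.normSq (z i) := by
          rw [← mul_assoc, ← Real.rpow_add hm_pos]
          norm_num
  -- conclude
  have hfinal : star x ⬝ᵥ (1 - Wmat Q₁ Q₂ s) *ᵥ x
      = (((∑ i, (1:ℝ) * Complex.normSq (z i)) - ∑ j, b (e₂ j) * Complex.normSq (w j) : ℝ) : ℂ) := by
    rw [Matrix.sub_mulVec, dotProduct_sub, Matrix.one_mulVec, hxx, hWqf]
    push_cast
    ring
  rw [hfinal]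
  have hlt : (0:ℝ) < (∑ i, (1:ℝ) * Complex.normSq (z i)) - ∑ j, b (e₂ j) * Complex.normSq (w j) := by
    nlinarith [hT_le, hS_pos, hm_lt]
  exact_mod_cast hlt

end AuxDetW

/-- For positive definite `Q₁, Q₂` and `t ∈ ℝ`:
`det[(Q₁+I)^t (Q₂+I)^{1−t} − Q₁^t Q₂^{1−t}] = det((Q₁+I)^t) det((Q₂+I)^{1−t}) det(I − W_t)`;
if moreover `W_t ≺ I` then
`log det[(Q₁+I)^t (Q₂+I)^{1−t} − Q₁^t Q₂^{1−t}]
 = t Tr log(Q₁+I) + (1−t) Tr log(Q₂+I) + Tr log(I − W_t)`,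
and `W_t ≺ I` holds automatically for all `t ∈ [0,1]`. -/
theorem det_factorization_W
    (Q₁ Q₂ : Matrix n n ℂ) (hQ₁ : Q₁.PosDef) (hQ₂ : Q₂.PosDef) (t : ℝ) :
    (mpow (Q₁ + 1) t * mpow (Q₂ + 1) (1 - t) - mpow Q₁ t * mpow Q₂ (1 - t)).det =
        (mpow (Q₁ + 1) t).det * (mpow (Q₂ + 1) (1 - t)).det * (1 - Wmat Q₁ Q₂ t).det ∧
      ((1 - Wmat Q₁ Q₂ t).PosDef →
        Complex.log
            (mpow (Q₁ + 1) t * mpow (Q₂ + 1) (1 - t) - mpow Q₁ t * mpow Q₂ (1 - t)).det =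
          (t : ℂ) * (mlog (Q₁ + 1)).trace + ((1 : ℂ) - (t : ℂ)) * (mlog (Q₂ + 1)).trace +
            (mlog (1 - Wmat Q₁ Q₂ t)).trace) ∧
      (∀ s ∈ Set.Icc (0 : ℝ) 1, (1 - Wmat Q₁ Q₂ s).PosDef) := by
  refine ⟨AuxDetW.det_factor Q₁ Q₂ hQ₁ hQ₂ t, ?_,
    fun s hs => AuxDetW.one_sub_W_posDef Q₁ Q₂ hQ₁ hQ₂ hs.1 hs.2⟩
  intro hW
  have hP₁ := AuxDetW.add_one_posDef hQ₁
  have hP₂ := AuxDetW.add_one_posDef hQ₂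
  rw [AuxDetW.det_factor Q₁ Q₂ hQ₁ hQ₂ t]
  have hdetW : (1 - Wmat Q₁ Q₂ t).det = ((∏ i, hW.1.eigenvalues i : ℝ) : ℂ) := by
    rw [hW.1.det_eq_prod_eigenvalues]; push_cast; rfl
  have ha : (0:ℝ) < ∏ i, hP₁.1.eigenvalues i ^ t :=
    Finset.prod_pos fun i _ => Real.rpow_pos_of_pos (hP₁.eigenvalues_pos i) t
  have hb : (0:ℝ) < ∏ i, hP₂.1.eigenvalues i ^ (1 - t) :=
    Finset.prod_pos fun i _ => Real.rpow_pos_of_pos (hP₂.eigenvalues_pos i) (1 - t)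
  have hc : (0:ℝ) < ∏ i, hW.1.eigenvalues i :=
    Finset.prod_pos fun i _ => hW.eigenvalues_pos i
  have h1 : Complex.log
        ((mpow (Q₁ + 1) t).det * (mpow (Q₂ + 1) (1 - t)).det * (1 - Wmat Q₁ Q₂ t).det)
      = Complex.log (mpow (Q₁ + 1) t).det + Complex.log (mpow (Q₂ + 1) (1 - t)).det
        + Complex.log (1 - Wmat Q₁ Q₂ t).det := by
    rw [AuxDetW.det_mpow_eq hP₁ t, AuxDetW.det_mpow_eq hP₂ (1 - t), hdetW]
    exact AuxDetW.clog_mul3 ha hb hc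
  rw [h1, AuxDetW.log_det_mpow hP₁ t, AuxDetW.log_det_mpow hP₂ (1 - t), AuxDetW.log_det hW]
  push_cast
  ring



end
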